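/- arXiv:0803.0804 — 6 statements merged into one kernel-verified Lean document; each statement's English description precedes it below -/
import Mathlib

section
/- Let $k \ge 1$. For every even natural number $m \ge 2$ there exists a normal subgroup $H$ of $G_k$ with Subgroup.index $H = m$. That is, $G_k$ has a normal subgroup of arbitrary even index. -/
open scoped BigOperators

noncomputable section

/-- The group representation `G_k` of the Cayley tree of order `k`:
the free product of `k+1` copies of the cyclic group of order two. -/
abbrev G (k : ℕ) : Type := Monoid.CoprodI (fun _ : Fin (k + 1) => Multiplicative (ZMod 2))

/-- The generators `a_0, ..., a_k` of `G_k`. -/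
def gen (k : ℕ) (s : Fin (k + 1)) : G k :=
  Monoid.CoprodI.of (i := s) (Multiplicative.ofAdd (1 : ZMod 2))

/-- `φ_p(t) = |t|^(p-2) t` (real powers). -/
noncomputable def phiP (p t : ℝ) : ℝ := |t| ^ (p - 2) * t

/-- The discrete `p`-Laplacian on the Cayley tree with resistances `r`:
`Δ_p u (x) = ∑_{s=0}^{k} φ_p ((u (x a_s) - u x) / r (x, x a_s))`. -/
noncomputable def pLap (k : ℕ) (p : ℝ) (r : G k × G k → ℝ) (u : G k → ℝ) (x : G k) : ℝ :=
  ∑ s : Fin (k + 1), phiP p ((u (x * gen k s) - u x) / r (x, x * gen k s))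

/-- A function `u : G_k → ℝ` is `H`-periodic if `u (y x) = u x` for all `y ∈ H`, `x ∈ G_k`. -/
def IsPeriodic (k : ℕ) (H : Subgroup (G k)) (u : G k → ℝ) : Prop :=
  ∀ y ∈ H, ∀ x : G k, u (y * x) = u x

/-- The coset index `φ(x) = ρ(x)(0)` associated to a permutation action `ρ` of `G_k` on `ℤ`. -/
def cosetIdx {k : ℕ} (ρ : G k →* Equiv.Perm ℤ) (x : G k) : ℤ := ρ x 0

def invHom {M : Type*} [Monoid M] (g : M) (hg : g * g = 1) :
    Multiplicative (ZMod 2) →* M where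
  toFun x := if Multiplicative.toAdd x = 0 then 1 else g
  map_one' := by simp
  map_mul' := by
    intro x y
    fin_cases x <;> fin_cases y <;> simp [hg, show (1 : ZMod 2) + 1 = 0 by decide] <;> simp +decide [hg]

theorem stmt1 (k : ℕ) (hk : 1 ≤ k) (m : ℕ) (hm2 : 2 ≤ m) (heven : Even m) :
    ∃ H : Subgroup (G k), H.Normal ∧ H.index = m := by
  obtain ⟨n, rfl⟩ := heven
  haveI : NeZero n := ⟨by omega⟩
  have hsr : ∀ i : ZMod n, DihedralGroup.sr i * DihedralGroup.sr i = 1 := by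
    intro i
    rw [DihedralGroup.sr_mul_sr, sub_self, DihedralGroup.one_def]
  let f : G k →* DihedralGroup n :=
    Monoid.CoprodI.lift fun s =>
      if s = 0 then invHom (DihedralGroup.sr 0) (hsr 0) else invHom (DihedralGroup.sr 1) (hsr 1)
  have hgen : ∀ s : Fin (k + 1), f (gen k s) =
      if s = 0 then DihedralGroup.sr 0 else DihedralGroup.sr 1 := by
    intro s
    simp only [f, gen, Monoid.CoprodI.lift_of]
    by_cases h : s = 0 <;> simp [h, invHom, show (1 : ZMod 2) ≠ 0 by decide]
  have h0 : f (gen k 0) = DihedralGroup.sr 0 := by simp [hgen]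
  have h1 : f (gen k 1) = DihedralGroup.sr 1 := by
    rw [hgen]
    have : (1 : Fin (k + 1)) ≠ 0 := by
      simp [Fin.ext_iff, Fin.val_one, Nat.mod_eq_of_lt (by omega : 1 < k + 1)]
    simp [this]
  have hr : ∀ i : ZMod n, DihedralGroup.r i ∈ f.range := by
    intro i
    have : DihedralGroup.r i = f ((gen k 0 * gen k 1) ^ i.val) := by
      rw [map_pow, map_mul, h0, h1, DihedralGroup.sr_mul_sr, sub_zero, DihedralGroup.r_one_pow]
      simp [ZMod.natCast_val]
    exact ⟨_, this.symm⟩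
  have hsurj : Function.Surjective f := by
    intro g
    cases g with
    | r i => exact hr i
    | sr i =>
        obtain ⟨x, hx⟩ := hr i
        refine ⟨gen k 0 * x, ?_⟩
        rw [map_mul, h0, hx, DihedralGroup.sr_mul_r, zero_add]
  refine ⟨f.ker, f.normal_ker, ?_⟩
  rw [Subgroup.index_ker, MonoidHom.range_eq_top.mpr hsurj]
  rw [Subgroup.card_top, Nat.card_eq_fintype_card, DihedralGroup.card]
  omega
end
end

section
/- Let $H$ be a normal subgroup of $G_k$ of finite index (Subgroup.index $H \ne 0$), let $1 < p < \infty$, and let $r : G_k \times G_k \to \mathbb{R}$ satisfy $r(x,y) = r(y,x) > 0$ for all $x,y$. If $u : G_k \to \mathbb{R}$ is $H$-periodic and $p$-harmonic (i.e. $\Delta_p u(x) = 0$ for all $x \in G_k$), then $u$ is constant: $u(x) = u(y)$ for all $x, y \in G_k$. -/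
open scoped BigOperators

noncomputable section

lemma phiP_nonpos {p t : ℝ} (ht : t ≤ 0) : phiP p t ≤ 0 := by
  unfold phiP
  exact mul_nonpos_iff.mpr (Or.inl ⟨Real.rpow_nonneg (abs_nonneg t) _, ht⟩)

lemma eq_zero_of_phiP_eq_zero {p t : ℝ} (h : phiP p t = 0) : t = 0 := by
  by_contra ht
  exact (mul_ne_zero (ne_of_gt (Real.rpow_pos_of_pos (abs_pos.mpr ht) _)) ht) h

theorem stmt4 (k : ℕ) (hk : 1 ≤ k) (p : ℝ) (hp1 : 1 < p)
    (r : G k × G k → ℝ) (hr_symm : ∀ x y : G k, r (x, y) = r (y, x)) (hr_pos : ∀ x y : G k, 0 < r (x, y))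
    (H : Subgroup (G k)) (hH : H.Normal) (hHfin : H.index ≠ 0)
    (u : G k → ℝ) (hu_per : IsPeriodic k H u)
    (hu_harm : ∀ x : G k, pLap k p r u x = 0) :
    ∀ x y : G k, u x = u y := by
  classical
  -- right-coset invariance (using normality)
  have hcoset : ∀ x : G k, ∀ h ∈ H, u (x * h) = u x := by
    intro x h hh
    have hx : x * h = (x * h * x⁻¹) * x := by group
    rw [hx, hu_per _ (hH.conj_mem h hh x) x]
  -- finiteness of the quotient
  have hfin : Finite (G k ⧸ H) := Nat.finite_of_card_ne_zero hHfin
  -- pick a maximizer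
  obtain ⟨q₀, hq₀⟩ := Finite.exists_max (fun q : G k ⧸ H => u q.out)
  set x₀ : G k := q₀.out with hx₀def
  set M : ℝ := u x₀ with hM
  have hmax : ∀ x : G k, u x ≤ M := by
    intro x
    have h1 : u ((QuotientGroup.mk x : G k ⧸ H)).out ≤ M := hq₀ _
    have h2 : u ((QuotientGroup.mk x : G k ⧸ H)).out = u x := by
      have hmem : x⁻¹ * ((QuotientGroup.mk x : G k ⧸ H)).out ∈ H := by
        rw [← QuotientGroup.eq]
        exact (QuotientGroup.out_eq' _).symm
      have : ((QuotientGroup.mk x : G k ⧸ H)).out = x * (x⁻¹ * ((QuotientGroup.mk x : G k ⧸ H)).out) := by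
        group
      rw [this, hcoset x _ hmem]
    rwa [h2] at h1
  -- maximum principle step
  have step : ∀ x : G k, u x = M → ∀ s : Fin (k + 1), u (x * gen k s) = M := by
    intro x hx s
    have hterm : ∀ t ∈ (Finset.univ : Finset (Fin (k + 1))),
        phiP p ((u (x * gen k t) - u x) / r (x, x * gen k t)) ≤ 0 := by
      intro t _
      apply phiP_nonpos
      apply div_nonpos_of_nonpos_of_nonneg
      · have := hmax (x * gen k t); linarith [hx ▸ this]
      · exact (hr_pos _ _).le
    have hzero := (Finset.sum_eq_zero_iff_of_nonpos hterm).mp (hu_harm x) s (Finset.mem_univ s)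
    have h0 := eq_zero_of_phiP_eq_zero hzero
    have hrne : r (x, x * gen k s) ≠ 0 := (hr_pos _ _).ne'
    have : u (x * gen k s) - u x = 0 := by
      field_simp at h0
      simpa using h0
    linarith [hx ▸ this]
  -- every element of Multiplicative (ZMod 2) is 1 or ofAdd 1
  have hZ2 : ∀ m : Multiplicative (ZMod 2), m = 1 ∨ m = Multiplicative.ofAdd 1 := by decide
  -- propagate the maximum through the whole group
  have key : ∀ g : G k, ∀ x : G k, u x = M → u (x * g) = M := by
    intro g
    induction g using Monoid.CoprodI.induction_on with
    | one => intro x hx; simpa using hx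
    | of i m =>
      intro x hx
      rcases hZ2 m with h1 | h1
      · rw [h1]; simpa using hx
      · rw [h1]
        exact step x hx i
    | mul a b ha hb =>
      intro x hx
      rw [← mul_assoc]
      exact hb _ (ha _ hx)
  have hall : ∀ x : G k, u x = M := by
    intro x
    have := key (x₀⁻¹ * x) x₀ rfl
    rwa [mul_inv_cancel_left] at this
  intro x y
  rw [hall x, hall y]
end
end

section
/- The coset index map $\phi : G_k \to \mathbb{Z}$ is surjective, and for all $x, y \in G_k$ one has $\phi(x) = \phi(y)$ if and only if $x^{-1} y \in H_{ij}$. In particular $\phi^{-1}(0) = H_{ij}$, so $\phi$ induces a bijection between the coset space $G_k / H_{ij}$ and $\mathbb{Z}$: the factor group can be written as $G_k | H_{ij} = \{\dots, H_{-1}, H_0, H_1, \dots\}$ with $H_n = \phi^{-1}(n)$. -/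
open scoped BigOperators

noncomputable section

theorem stmt5 (k : ℕ) (hk : 1 ≤ k) (i j : Fin (k + 1)) (hij : i ≠ j)
    (ρ : G k →* Equiv.Perm ℤ)
    (hρi : ∀ n : ℤ, ρ (gen k i) n = 1 - n)
    (hρj : ∀ n : ℤ, ρ (gen k j) n = -1 - n)
    (hρs : ∀ s : Fin (k + 1), s ≠ i → s ≠ j → ρ (gen k s) = 1)
    (f : G k →* G k)
    (hfi : f (gen k i) = gen k i) (hfj : f (gen k j) = gen k j)
    (hfs : ∀ s : Fin (k + 1), s ≠ i → s ≠ j → f (gen k s) = 1) :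
    Function.Surjective (cosetIdx ρ) ∧
      ∀ x y : G k, cosetIdx ρ x = cosetIdx ρ y ↔ x⁻¹ * y ∈ f.ker := by

  -- Basic facts about the generators
  have hgen_sq : ∀ s : Fin (k + 1), gen k s * gen k s = 1 := by
    intro s
    have h1 : (Multiplicative.ofAdd (1 : ZMod 2)) * (Multiplicative.ofAdd (1 : ZMod 2)) = 1 := by
      decide
    rw [gen, ← map_mul, h1, map_one]
  have hgen_inv : ∀ s : Fin (k + 1), (gen k s)⁻¹ = gen k s := by
    intro s
    exact inv_eq_of_mul_eq_one_right (hgen_sq s)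
  set t : G k := gen k i * gen k j with ht
  have hρt : ∀ n : ℤ, ρ t n = n + 2 := by
    intro n
    rw [ht, map_mul, Equiv.Perm.mul_apply, hρj, hρi]
    ring
  have hρtm : ∀ (m : ℤ) (n : ℤ), ρ (t ^ m) n = n + 2 * m := by
    intro m
    induction m using Int.induction_on with
    | zero => simp
    | succ m ih =>
      intro n
      rw [zpow_add, zpow_one, map_mul, Equiv.Perm.mul_apply, hρt, ih]
      push_cast; ring
    | pred m ih =>
      intro n
      have h1 : (-(m : ℤ) - 1) = (-(m:ℤ)) + (-1) := by ring
      rw [h1, zpow_add, map_mul, Equiv.Perm.mul_apply]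
      have h2 : ρ (t ^ (-1 : ℤ)) n = n - 2 := by
        have h3 : ρ t (n - 2) = n := by rw [hρt]; ring
        rw [zpow_neg, zpow_one, map_inv, Equiv.Perm.inv_def]
        exact (Equiv.symm_apply_eq _).mpr h3.symm
      rw [h2, ih]
      push_cast; ring
  -- The explicit section w of the coset index map
  set w : ℤ → G k := fun c => if Even c then t ^ (c / 2) else gen k i * t ^ ((1 - c) / 2)
    with hwdef
  have hφw : ∀ c : ℤ, cosetIdx ρ (w c) = c := by
    intro c
    by_cases hc : Even c
    · have h2 : 2 * (c / 2) = c := by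
        obtain ⟨m, hm⟩ := hc; omega
      simp only [hwdef, if_pos hc, cosetIdx]
      rw [hρtm]
      omega
    · have hodd : c % 2 = 1 := by
        rcases Int.even_or_odd c with h | h
        · exact absurd h hc
        · obtain ⟨m, hm⟩ := h; omega
      simp only [hwdef, if_neg hc, cosetIdx]
      rw [map_mul, Equiv.Perm.mul_apply, hρtm, hρi]
      omega
  have hparity : ∀ c : ℤ, Even c ↔ c % 2 = 0 := fun c => Int.even_iff
  -- Key equivariance lemma
  have hw : ∀ (x : G k) (c : ℤ), f x * w c = w (ρ x c) := by
    intro x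
    induction x using Monoid.CoprodI.induction_on with
    | one => simp
    | mul x y hx hy =>
      intro c
      rw [map_mul, map_mul, Equiv.Perm.mul_apply, mul_assoc, hy, hx]
    | of s m =>
      rcases (show m = 1 ∨ m = Multiplicative.ofAdd 1 by revert m; decide) with hm | hm
      · subst hm; simp
      · subst hm
        have hof : Monoid.CoprodI.of (i := s) (Multiplicative.ofAdd (1 : ZMod 2)) = gen k s := rfl
        rw [hof]
        by_cases hsi : s = i
        · subst hsi
          intro c
          rw [hfi]
          by_cases hc : Even c
          · have hnc : ¬ Even (1 - c) := by
              rw [hparity] at *; omega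
            have he : (1 - (1 - c)) / 2 = c / 2 := by omega
            simp only [hwdef, if_pos hc, hρi, if_neg hnc, he]
          · have hnc : Even (1 - c) := by
              rw [hparity] at *; omega
            have he : (1 - c) / 2 = (1 - c) / 2 := rfl
            simp only [hwdef, if_neg hc, hρi, if_pos hnc]
            rw [← mul_assoc, hgen_sq, one_mul]
        · by_cases hsj : s = j
          · subst hsj
            intro c
            rw [hfj]
            by_cases hc : Even c
            · have hnc : ¬ Even (-1 - c) := by
                rw [hparity] at *; omega
              have he : (1 - (-1 - c)) / 2 = 1 + c / 2 := by
                rw [hparity] at hc; omega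
              simp only [hwdef, if_pos hc, hρj, if_neg hnc, he]
              rw [zpow_add, zpow_one, ← mul_assoc, ht, ← mul_assoc, hgen_sq, one_mul]
            · have hnc : Even (-1 - c) := by
                rw [hparity] at *; omega
              have he : (-1 - c) / 2 = (-1) + (1 - c) / 2 := by
                rw [hparity] at *; omega
              simp only [hwdef, if_neg hc, hρj, if_pos hnc, he]
              rw [zpow_add, zpow_neg, zpow_one, ht, mul_inv_rev, hgen_inv, hgen_inv,
                ← mul_assoc]
          · intro c
            rw [hfs s hsi hsj, hρs s hsi hsj, one_mul, Equiv.Perm.one_apply]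
  have hw0 : w 0 = 1 := by
    simp [hwdef]
  have key : ∀ x : G k, f x = w (cosetIdx ρ x) := by
    intro x
    have := hw x 0
    rwa [hw0, mul_one] at this
  constructor
  · intro c
    exact ⟨w c, hφw c⟩
  · intro x y
    rw [MonoidHom.mem_ker, map_mul, map_inv, inv_mul_eq_one]
    constructor
    · intro h
      rw [key x, key y, h]
    · intro h
      have := congrArg (cosetIdx ρ) (key x ▸ key y ▸ h : w (cosetIdx ρ x) = w (cosetIdx ρ y))
      rwa [hφw, hφw] at this
end
end

section
/- (Lemma 1) Let $x \in G_k$ with $\phi(x) = n$, and let $S(x) = \{x a_s : s = 0,\dots,k\}$ be the neighbor set of $x$. Then $S(x) \subseteq H_{n-1} \cup H_n \cup H_{n+1}$, and moreover $|S(x) \cap H_{n-1}| = 1$, $|S(x) \cap H_n| = k - 1$, and $|S(x) \cap H_{n+1}| = 1$, where $H_m = \phi^{-1}(m)$. -/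
open scoped BigOperators

noncomputable section

lemma gen_injective (k : ℕ) : Function.Injective (gen k) := by
  intro s t hst
  classical
  set π : G k →* Multiplicative (Fin (k+1) → ZMod 2) :=
    Monoid.CoprodI.lift (fun s => AddMonoidHom.toMultiplicative
      (AddMonoidHom.single (fun _ : Fin (k+1) => ZMod 2) s)) with hπ
  have h := congrArg π hst
  rw [hπ] at h
  simp only [gen, Monoid.CoprodI.lift_of] at h
  have h2 := congrArg (fun f => (Multiplicative.toAdd f) s) h
  simp only [AddMonoidHom.toMultiplicative_apply_apply, toAdd_ofAdd, AddMonoidHom.single_apply,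
    Pi.single_apply] at h2
  by_contra hne
  rw [if_pos trivial, if_neg hne] at h2
  exact one_ne_zero h2

lemma counts_aux {N : ℕ} (i j : Fin (N + 1)) (hij : i ≠ j)
    (f : Fin (N + 1) → ℤ) (n : ℤ) (hfi : f i = n + 1) (hfj : f j = n - 1)
    (hfo : ∀ s, s ≠ i → s ≠ j → f s = n) :
    {s | f s = n - 1}.ncard = 1 ∧ {s | f s = n}.ncard = N - 1 ∧
      {s | f s = n + 1}.ncard = 1 := by
  classical
  have h1 : {s | f s = n - 1} = {j} := by
    ext s
    simp only [Set.mem_setOf_eq, Set.mem_singleton_iff]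
    constructor
    · intro h
      by_contra hsj
      rcases eq_or_ne s i with rfl | hsi
      · rw [hfi] at h; omega
      · rw [hfo s hsi hsj] at h; omega
    · intro h; subst h; exact hfj
  have h3 : {s | f s = n + 1} = {i} := by
    ext s
    simp only [Set.mem_setOf_eq, Set.mem_singleton_iff]
    constructor
    · intro h
      by_contra hsi
      rcases eq_or_ne s j with rfl | hsj
      · rw [hfj] at h; omega
      · rw [hfo s hsi hsj] at h; omega
    · intro h; subst h; exact hfi
  have h2 : {s | f s = n} = ((({i, j} : Finset (Fin (N + 1)))ᶜ : Finset _) : Set _) := by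
    ext s
    simp only [Set.mem_setOf_eq, Finset.coe_compl, Set.mem_compl_iff, Finset.mem_coe,
      Finset.mem_insert, Finset.mem_singleton]
    constructor
    · intro h hmem
      rcases hmem with rfl | rfl
      · rw [hfi] at h; omega
      · rw [hfj] at h; omega
    · intro h
      push_neg at h
      exact hfo s h.1 h.2
  refine ⟨by rw [h1]; exact Set.ncard_singleton j, ?_, by rw [h3]; exact Set.ncard_singleton i⟩
  rw [h2, Set.ncard_coe_finset, Finset.card_compl,
    Finset.card_insert_of_notMem (by simp [hij]), Finset.card_singleton]
  simp only [Fintype.card_fin]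
  omega

theorem stmt6 (k : ℕ) (hk : 1 ≤ k) (i j : Fin (k + 1)) (hij : i ≠ j)
    (ρ : G k →* Equiv.Perm ℤ)
    (hρi : ∀ n : ℤ, ρ (gen k i) n = 1 - n)
    (hρj : ∀ n : ℤ, ρ (gen k j) n = -1 - n)
    (hρs : ∀ s : Fin (k + 1), s ≠ i → s ≠ j → ρ (gen k s) = 1)
    (x : G k) (n : ℤ) (hx : cosetIdx ρ x = n) :
    (∀ y ∈ (fun s : Fin (k + 1) => x * gen k s) '' Set.univ,
        cosetIdx ρ y = n - 1 ∨ cosetIdx ρ y = n ∨ cosetIdx ρ y = n + 1) ∧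
      (((fun s : Fin (k + 1) => x * gen k s) '' Set.univ ∩
        {y : G k | cosetIdx ρ y = n - 1}).ncard = 1) ∧
      (((fun s : Fin (k + 1) => x * gen k s) '' Set.univ ∩
        {y : G k | cosetIdx ρ y = n}).ncard = k - 1) ∧
      (((fun s : Fin (k + 1) => x * gen k s) '' Set.univ ∩
        {y : G k | cosetIdx ρ y = n + 1}).ncard = 1) := by
  classical
  -- every element acts affinely on ℤ
  have affine : ∀ z : G k, ∃ ε c : ℤ, (ε = 1 ∨ ε = -1) ∧ ∀ m : ℤ, ρ z m = ε * m + c := by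
    intro z
    induction z using Monoid.CoprodI.induction_on with
    | one => exact ⟨1, 0, Or.inl rfl, by simp⟩
    | of s m =>
      have hm : m = 1 ∨ m = Multiplicative.ofAdd (1 : ZMod 2) := by revert m; decide
      rcases hm with rfl | rfl
      · exact ⟨1, 0, Or.inl rfl, by simp⟩
      · by_cases hsi : s = i
        · exact ⟨-1, 1, Or.inr rfl, fun m => by
            rw [show (Monoid.CoprodI.of (Multiplicative.ofAdd (1 : ZMod 2)) : G k) = gen k s from
              rfl, hsi, hρi]; ring⟩
        · by_cases hsj : s = j
          · exact ⟨-1, -1, Or.inr rfl, fun m => by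
              rw [show (Monoid.CoprodI.of (Multiplicative.ofAdd (1 : ZMod 2)) : G k) = gen k s from
                rfl, hsj, hρj]; ring⟩
          · exact ⟨1, 0, Or.inl rfl, fun m => by
              rw [show (Monoid.CoprodI.of (Multiplicative.ofAdd (1 : ZMod 2)) : G k) = gen k s from
                rfl, hρs s hsi hsj]; simp⟩
    | mul a b ha hb =>
      obtain ⟨ε₁, c₁, hε₁, h₁⟩ := ha
      obtain ⟨ε₂, c₂, hε₂, h₂⟩ := hb
      refine ⟨ε₁ * ε₂, ε₁ * c₂ + c₁, ?_, fun m => ?_⟩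
      · rcases hε₁ with rfl | rfl <;> rcases hε₂ with rfl | rfl <;> simp
      · rw [map_mul, Equiv.Perm.mul_apply, h₂, h₁]; ring
  obtain ⟨ε, c, hε, haff⟩ := affine x
  have hc : c = n := by
    have h0 := haff 0
    rw [show ρ x 0 = cosetIdx ρ x from rfl, hx] at h0
    omega
  rw [hc] at haff
  -- the coset index of the neighbours
  have hval : ∀ s : Fin (k + 1), cosetIdx ρ (x * gen k s) =
      ε * (if s = i then 1 else if s = j then -1 else 0) + n := by
    intro s
    show ρ (x * gen k s) 0 = _
    rw [map_mul, Equiv.Perm.mul_apply, haff]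
    congr 2
    by_cases hsi : s = i
    · subst hsi; rw [if_pos rfl, hρi]; ring
    · by_cases hsj : s = j
      · subst hsj; rw [if_neg hsi, if_pos rfl, hρj]; ring
      · rw [if_neg hsi, if_neg hsj, hρs s hsi hsj]; rfl
  -- reduce intersections to sets of indices
  have hginj : Function.Injective (fun s : Fin (k + 1) => x * gen k s) := by
    intro a b hab
    exact gen_injective k (mul_left_cancel hab)
  have himg : ∀ m : ℤ, ((fun s : Fin (k + 1) => x * gen k s) '' Set.univ ∩
      {y : G k | cosetIdx ρ y = m}) =
      (fun s : Fin (k + 1) => x * gen k s) '' {s | cosetIdx ρ (x * gen k s) = m} := by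
    intro m
    ext y
    constructor
    · rintro ⟨⟨s, -, rfl⟩, hy⟩
      exact ⟨s, hy, rfl⟩
    · rintro ⟨s, hs, rfl⟩
      exact ⟨⟨s, Set.mem_univ s, rfl⟩, hs⟩
  have hcard : ∀ m : ℤ, ((fun s : Fin (k + 1) => x * gen k s) '' Set.univ ∩
      {y : G k | cosetIdx ρ y = m}).ncard = {s | cosetIdx ρ (x * gen k s) = m}.ncard := by
    intro m
    rw [himg m, Set.ncard_image_of_injective _ hginj]
  have hcounts : {s | cosetIdx ρ (x * gen k s) = n - 1}.ncard = 1 ∧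
      {s | cosetIdx ρ (x * gen k s) = n}.ncard = k - 1 ∧
      {s | cosetIdx ρ (x * gen k s) = n + 1}.ncard = 1 := by
    rcases hε with rfl | rfl
    · exact counts_aux i j hij (fun s => cosetIdx ρ (x * gen k s)) n
        (by beta_reduce; rw [hval, if_pos rfl]; omega)
        (by beta_reduce; rw [hval, if_neg hij.symm, if_pos rfl]; omega)
        (fun s hsi hsj => by beta_reduce; rw [hval, if_neg hsi, if_neg hsj]; omega)
    · exact counts_aux j i hij.symm (fun s => cosetIdx ρ (x * gen k s)) n
        (by beta_reduce; rw [hval, if_neg hij.symm, if_pos rfl]; omega)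
        (by beta_reduce; rw [hval, if_pos rfl]; omega)
        (fun s hsi hsj => by beta_reduce; rw [hval, if_neg hsi, if_neg hsj]; omega)
  refine ⟨?_, by rw [hcard]; exact hcounts.1, by rw [hcard]; exact hcounts.2.1,
    by rw [hcard]; exact hcounts.2.2⟩
  rintro y ⟨s, -, rfl⟩
  rw [hval s]
  rcases hε with rfl | rfl <;> split_ifs <;> omega
end
end

section
/- (Theorem 3, family $U_1$) Assume $(\varrho_n)_{n \in \mathbb{Z}}$ is summable. For every constant $C \ge 0$, the function $u : G_k \to \mathbb{R}$ defined by $u(x) = C \cdot \Sigma^-(\phi(x)) = C \sum_{s \le \phi(x) - 1} \varrho_s$ is $H_{ij}$-periodic and $p$-harmonic on the Cayley tree: $\Delta_p u(x) = 0$ for all $x \in G_k$, and $u(yx) = u(x)$ for all $y \in H_{ij}$, $x \in G_k$. -/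
open scoped BigOperators

noncomputable section

lemma phiP_neg' (p t : ℝ) : phiP p (-t) = - phiP p t := by
  unfold phiP; rw [abs_neg]; ring

lemma phiP_zero' (p : ℝ) : phiP p 0 = 0 := by
  unfold phiP; rw [mul_zero]

lemma tsum_lt_succ' (ϱ : ℤ → ℝ) (h : Summable ϱ) (n : ℤ) :
    (∑' s : {m : ℤ // m < n + 1}, ϱ s) = (∑' s : {m : ℤ // m < n}, ϱ s) + ϱ n := by
  have hset : {m : ℤ | m < n + 1} = {m : ℤ | m < n} ∪ {n} := by
    ext m
    simp [Int.lt_add_one_iff, le_iff_lt_or_eq, or_comm]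
  have hd : Disjoint {m : ℤ | m < n} ({n} : Set ℤ) := by
    simp [Set.disjoint_singleton_right]
  calc (∑' s : {m : ℤ // m < n + 1}, ϱ s)
      = ∑' s : ↑({m : ℤ | m < n} ∪ {n}), ϱ s := tsum_congr_set_coe ϱ hset
    _ = (∑' s : {m : ℤ // m < n}, ϱ s) + ∑' s : ({n} : Set ℤ), ϱ s :=
        Summable.tsum_union_disjoint hd (h.subtype _) (h.subtype _)
    _ = (∑' s : {m : ℤ // m < n}, ϱ s) + ϱ n := by rw [tsum_singleton]

theorem stmt8 (k : ℕ) (hk : 1 ≤ k) (p : ℝ) (hp1 : 1 < p)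
    (r : G k × G k → ℝ) (hr_symm : ∀ x y : G k, r (x, y) = r (y, x)) (hr_pos : ∀ x y : G k, 0 < r (x, y))
    (i j : Fin (k + 1)) (hij : i ≠ j)
    (ρ : G k →* Equiv.Perm ℤ)
    (hρi : ∀ n : ℤ, ρ (gen k i) n = 1 - n)
    (hρj : ∀ n : ℤ, ρ (gen k j) n = -1 - n)
    (hρs : ∀ s : Fin (k + 1), s ≠ i → s ≠ j → ρ (gen k s) = 1)
    (f : G k →* G k)
    (hfi : f (gen k i) = gen k i) (hfj : f (gen k j) = gen k j)
    (hfs : ∀ s : Fin (k + 1), s ≠ i → s ≠ j → f (gen k s) = 1)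
    (ϱ : ℤ → ℝ) (hϱ_pos : ∀ n : ℤ, 0 < ϱ n)
    (hrϱ : ∀ x y : G k, cosetIdx ρ y = cosetIdx ρ x + 1 → r (x, y) = ϱ (cosetIdx ρ x))
    (hϱ_sum : Summable ϱ)
    (C : ℝ) (hC : 0 ≤ C) :
    IsPeriodic k f.ker (fun x => C * (∑' s : {m : ℤ // m < cosetIdx ρ x}, ϱ s)) ∧
      ∀ x : G k, pLap k p r (fun x => C * (∑' s : {m : ℤ // m < cosetIdx ρ x}, ϱ s)) x = 0 := by
  have hgen : ∀ (s : Fin (k + 1)) (m : Multiplicative (ZMod 2)),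
      m = 1 ∨ Monoid.CoprodI.of (i := s) m = gen k s := by
    intro s m
    rcases (by decide : ∀ m : Multiplicative (ZMod 2),
        m = 1 ∨ m = Multiplicative.ofAdd 1) m with h | h
    · exact Or.inl h
    · right; rw [h]; rfl
  -- every element acts affinely with slope ±1
  have haff : ∀ x : G k, ∃ ε : ℤ, (ε = 1 ∨ ε = -1) ∧ ∀ n : ℤ, ρ x n = ε * n + cosetIdx ρ x := by
    intro x
    induction x using Monoid.CoprodI.induction_on with
    | one => exact ⟨1, Or.inl rfl, by simp [cosetIdx]⟩
    | of s m =>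
      rcases hgen s m with rfl | hm
      · exact ⟨1, Or.inl rfl, by simp [cosetIdx]⟩
      · rw [hm]
        by_cases hsi : s = i
        · subst hsi
          refine ⟨-1, Or.inr rfl, fun n => ?_⟩
          simp only [cosetIdx, hρi]; ring
        by_cases hsj : s = j
        · subst hsj
          refine ⟨-1, Or.inr rfl, fun n => ?_⟩
          simp only [cosetIdx, hρj]; ring
        · refine ⟨1, Or.inl rfl, fun n => ?_⟩
          simp [cosetIdx, hρs s hsi hsj]
    | mul x y hx hy =>
      obtain ⟨εx, hx1, hx2⟩ := hx
      obtain ⟨εy, hy1, hy2⟩ := hy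
      refine ⟨εx * εy, ?_, fun n => ?_⟩
      · rcases hx1 with rfl | rfl <;> rcases hy1 with rfl | rfl <;> norm_num
      · have h1 : ∀ m : ℤ, ρ (x * y) m = εx * (εy * m + cosetIdx ρ y) + cosetIdx ρ x := by
          intro m
          rw [map_mul, Equiv.Perm.mul_apply, hy2, hx2]
        have h0 : cosetIdx ρ (x * y) = εx * cosetIdx ρ y + cosetIdx ρ x := by
          have := h1 0; simpa [cosetIdx] using this
        rw [h1 n, h0]; ring
  -- ρ factors through f
  have hcomp : ∀ x : G k, ρ (f x) = ρ x := by
    intro x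
    induction x using Monoid.CoprodI.induction_on with
    | one => simp
    | of s m =>
      rcases hgen s m with rfl | hm
      · simp
      · rw [hm]
        by_cases hsi : s = i
        · rw [hsi, hfi]
        by_cases hsj : s = j
        · rw [hsj, hfj]
        · rw [hfs s hsi hsj, map_one, hρs s hsi hsj]
    | mul x y hx hy => rw [map_mul, map_mul, hx, hy, ← map_mul]
  constructor
  · -- periodicity
    intro y hy x
    rw [MonoidHom.mem_ker] at hy
    have hρy : ρ y = 1 := by rw [← hcomp y, hy, map_one]
    have hco : cosetIdx ρ (y * x) = cosetIdx ρ x := by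
      simp [cosetIdx, map_mul, Equiv.Perm.mul_apply, hρy]
    have hts := tsum_congr_set_coe ϱ
      (show {m : ℤ | m < cosetIdx ρ (y * x)} = {m : ℤ | m < cosetIdx ρ x} by rw [hco])
    exact congrArg (fun t => C * t) hts
  · -- p-harmonicity
    intro x
    obtain ⟨ε, hε, hεx⟩ := haff x
    have hidx : ∀ s : Fin (k + 1), s ≠ i → s ≠ j →
        cosetIdx ρ (x * gen k s) = cosetIdx ρ x := by
      intro s hsi hsj
      simp [cosetIdx, map_mul, Equiv.Perm.mul_apply, hρs s hsi hsj]
    have hii : cosetIdx ρ (x * gen k i) = cosetIdx ρ x + ε := by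
      have h1 : cosetIdx ρ (x * gen k i) = ρ x (ρ (gen k i) 0) := by
        simp [cosetIdx, map_mul, Equiv.Perm.mul_apply]
      rw [h1, hρi, show (1 : ℤ) - 0 = 1 by ring, hεx 1]; ring
    have hjj : cosetIdx ρ (x * gen k j) = cosetIdx ρ x - ε := by
      have h1 : cosetIdx ρ (x * gen k j) = ρ x (ρ (gen k j) 0) := by
        simp [cosetIdx, map_mul, Equiv.Perm.mul_apply]
      rw [h1, hρj, show (-1 : ℤ) - 0 = -1 by ring, hεx (-1)]; ring
    have hT := tsum_lt_succ' ϱ hϱ_sum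
    -- the two key quotient computations
    have keyP : ∀ a : G k, cosetIdx ρ a = cosetIdx ρ x + 1 →
        (C * (∑' s : {m : ℤ // m < cosetIdx ρ a}, ϱ s)
          - C * (∑' s : {m : ℤ // m < cosetIdx ρ x}, ϱ s)) / r (x, a) = C := by
      intro a ha
      rw [ha, hT (cosetIdx ρ x), hrϱ x a ha]
      have h2 : C * ((∑' s : {m : ℤ // m < cosetIdx ρ x}, ϱ s) + ϱ (cosetIdx ρ x))
          - C * (∑' s : {m : ℤ // m < cosetIdx ρ x}, ϱ s) = C * ϱ (cosetIdx ρ x) := by ring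
      rw [h2, mul_div_assoc, div_self (hϱ_pos _).ne', mul_one]
    have keyM : ∀ a : G k, cosetIdx ρ a = cosetIdx ρ x - 1 →
        (C * (∑' s : {m : ℤ // m < cosetIdx ρ a}, ϱ s)
          - C * (∑' s : {m : ℤ // m < cosetIdx ρ x}, ϱ s)) / r (x, a) = -C := by
      intro a ha
      have hr : r (x, a) = ϱ (cosetIdx ρ a) := by
        rw [hr_symm]
        exact hrϱ a x (by rw [ha]; ring)
      have hTn : (∑' s : {m : ℤ // m < cosetIdx ρ x}, ϱ s)
          = (∑' s : {m : ℤ // m < cosetIdx ρ a}, ϱ s) + ϱ (cosetIdx ρ a) := by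
        have := hT (cosetIdx ρ a)
        rw [ha, show cosetIdx ρ x - 1 + 1 = cosetIdx ρ x by ring] at this
        rw [this, ha]
      rw [hr, hTn]
      have h2 : C * (∑' s : {m : ℤ // m < cosetIdx ρ a}, ϱ s)
          - C * ((∑' s : {m : ℤ // m < cosetIdx ρ a}, ϱ s) + ϱ (cosetIdx ρ a))
          = -C * ϱ (cosetIdx ρ a) := by ring
      rw [h2, neg_mul, neg_div, mul_div_assoc, div_self (hϱ_pos _).ne', mul_one]
    simp only [pLap]
    rw [Finset.sum_eq_add i j hij
      (fun c _ hc => by rw [hidx c hc.1 hc.2, sub_self, zero_div, phiP_zero'])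
      (fun h => absurd (Finset.mem_univ i) h)
      (fun h => absurd (Finset.mem_univ j) h)]
    rcases hε with rfl | rfl
    · rw [keyP (x * gen k i) hii, keyM (x * gen k j) hjj, phiP_neg', add_neg_cancel]
    · rw [keyM (x * gen k i) (by rw [hii]; ring),
        keyP (x * gen k j) (by rw [hjj]; ring), phiP_neg', neg_add_cancel]
end
end

section
/- Assume $(\varrho_n)_{n \in \mathbb{Z}}$ is summable. For all real constants $A, B \in \mathbb{R}$, the function $u : G_k \to \mathbb{R}$ defined by $u(x) = A \, \Sigma^-(\phi(x)) + B \, \Sigma^+(\phi(x))$ is $H_{ij}$-periodic and $p$-harmonic: $\Delta_p u(x) = 0$ for all $x \in G_k$. -/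
open scoped BigOperators

noncomputable section

theorem stmt15 (k : ℕ) (hk : 1 ≤ k) (p : ℝ) (hp1 : 1 < p)
    (r : G k × G k → ℝ) (hr_symm : ∀ x y : G k, r (x, y) = r (y, x)) (hr_pos : ∀ x y : G k, 0 < r (x, y))
    (i j : Fin (k + 1)) (hij : i ≠ j)
    (ρ : G k →* Equiv.Perm ℤ)
    (hρi : ∀ n : ℤ, ρ (gen k i) n = 1 - n)
    (hρj : ∀ n : ℤ, ρ (gen k j) n = -1 - n)
    (hρs : ∀ s : Fin (k + 1), s ≠ i → s ≠ j → ρ (gen k s) = 1)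
    (f : G k →* G k)
    (hfi : f (gen k i) = gen k i) (hfj : f (gen k j) = gen k j)
    (hfs : ∀ s : Fin (k + 1), s ≠ i → s ≠ j → f (gen k s) = 1)
    (ϱ : ℤ → ℝ) (hϱ_pos : ∀ n : ℤ, 0 < ϱ n)
    (hrϱ : ∀ x y : G k, cosetIdx ρ y = cosetIdx ρ x + 1 → r (x, y) = ϱ (cosetIdx ρ x))
    (hϱ_sum : Summable ϱ)
    (A B : ℝ) :
    IsPeriodic k f.ker (fun x => A * (∑' s : {m : ℤ // m < cosetIdx ρ x}, ϱ s) + B * (∑' s : {m : ℤ // cosetIdx ρ x ≤ m}, ϱ s)) ∧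
      ∀ x : G k, pLap k p r (fun x => A * (∑' s : {m : ℤ // m < cosetIdx ρ x}, ϱ s) + B * (∑' s : {m : ℤ // cosetIdx ρ x ≤ m}, ϱ s)) x = 0 := by
  -- the value function on ℤ
  set U : ℤ → ℝ := fun n => A * (∑' s : {m : ℤ // m < n}, ϱ s) + B * (∑' s : {m : ℤ // n ≤ m}, ϱ s)
    with hU
  -- tsum splitting lemmas
  have hSm : ∀ n : ℤ, (∑' s : {m : ℤ // m < n + 1}, ϱ s) = (∑' s : {m : ℤ // m < n}, ϱ s) + ϱ n := by
    intro n
    have hset : {m : ℤ | m < n + 1} = {m : ℤ | m < n} ∪ {n} := by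
      ext m; simp only [Set.mem_setOf_eq, Set.mem_union, Set.mem_singleton_iff]; omega
    have h1 : (∑' s : {m : ℤ // m < n + 1}, ϱ s) = ∑' s : ↥({m : ℤ | m < n} ∪ {n}), ϱ s :=
      tsum_congr_set_coe ϱ hset
    rw [h1, Summable.tsum_union_disjoint (by simp [Set.disjoint_singleton_right])
      (hϱ_sum.subtype _) (hϱ_sum.subtype _), tsum_singleton]
    rfl
  have hSp : ∀ n : ℤ, (∑' s : {m : ℤ // n ≤ m}, ϱ s) = (∑' s : {m : ℤ // n + 1 ≤ m}, ϱ s) + ϱ n := by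
    intro n
    have hset : {m : ℤ | n ≤ m} = {m : ℤ | n + 1 ≤ m} ∪ {n} := by
      ext m; simp only [Set.mem_setOf_eq, Set.mem_union, Set.mem_singleton_iff]; omega
    have h1 : (∑' s : {m : ℤ // n ≤ m}, ϱ s) = ∑' s : ↥({m : ℤ | n + 1 ≤ m} ∪ {n}), ϱ s :=
      tsum_congr_set_coe ϱ hset
    rw [h1, Summable.tsum_union_disjoint (by simp [Set.disjoint_singleton_right])
      (hϱ_sum.subtype _) (hϱ_sum.subtype _), tsum_singleton]
    rfl
  have hUdiff : ∀ n : ℤ, U (n + 1) - U n = (A - B) * ϱ n := by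
    intro n
    have h2 : (∑' s : {m : ℤ // n ≤ m}, ϱ s) = (∑' s : {m : ℤ // n + 1 ≤ m}, ϱ s) + ϱ n := hSp n
    simp only [hU]
    rw [hSm n, h2]; ring
  -- every ρ x is an affine map n ↦ ρ x 0 + ε n with ε = ±1
  have haff : ∀ x : G k, ∃ ε : ℤ, (ε = 1 ∨ ε = -1) ∧ ∀ n : ℤ, ρ x n = ρ x 0 + ε * n := by
    intro x
    induction x using Monoid.CoprodI.induction_on with
    | one => exact ⟨1, Or.inl rfl, by simp⟩
    | of s m =>
      have hm : m = 1 ∨ m = Multiplicative.ofAdd (1 : ZMod 2) := by revert m; decide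
      rcases hm with rfl | rfl
      · exact ⟨1, Or.inl rfl, by simp⟩
      · by_cases hsi : s = i
        · subst hsi
          refine ⟨-1, Or.inr rfl, fun n => ?_⟩
          show ρ (gen k s) n = ρ (gen k s) 0 + (-1) * n
          rw [hρi n, hρi 0]; ring
        · by_cases hsj : s = j
          · subst hsj
            refine ⟨-1, Or.inr rfl, fun n => ?_⟩
            show ρ (gen k s) n = ρ (gen k s) 0 + (-1) * n
            rw [hρj n, hρj 0]; ring
          · refine ⟨1, Or.inl rfl, fun n => ?_⟩
            show ρ (gen k s) n = ρ (gen k s) 0 + 1 * n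
            rw [hρs s hsi hsj]; simp
    | mul x y hx hy =>
      obtain ⟨ε₁, hε₁, H₁⟩ := hx
      obtain ⟨ε₂, hε₂, H₂⟩ := hy
      refine ⟨ε₁ * ε₂, ?_, fun n => ?_⟩
      · rcases hε₁ with rfl | rfl <;> rcases hε₂ with rfl | rfl <;> simp
      · have e1 : ρ (x * y) n = ρ x (ρ y n) := by rw [map_mul]; rfl
        have e0 : ρ (x * y) 0 = ρ x (ρ y 0) := by rw [map_mul]; rfl
        rw [e1, e0, H₂ n, H₁ (ρ y 0 + ε₂ * n), H₁ (ρ y 0)]; ring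
  -- ρ factors through f
  have hcomp : ρ.comp f = ρ := by
    apply Monoid.CoprodI.ext_hom
    intro s
    refine MonoidHom.ext fun m => ?_
    have hm : m = 1 ∨ m = Multiplicative.ofAdd (1 : ZMod 2) := by revert m; decide
    rcases hm with rfl | rfl
    · simp
    · show ρ (f (gen k s)) = ρ (gen k s)
      by_cases hsi : s = i
      · subst hsi; rw [hfi]
      · by_cases hsj : s = j
        · subst hsj; rw [hfj]
        · rw [hfs s hsi hsj, map_one, hρs s hsi hsj]
  have hρf : ∀ x : G k, ρ (f x) = ρ x := fun x => DFunLike.congr_fun hcomp x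
  -- coset indices of neighbours
  have hnbr : ∀ (x : G k) (s : Fin (k + 1)),
      cosetIdx ρ (x * gen k s) = ρ x (ρ (gen k s) 0) := by
    intro x s
    simp [cosetIdx, map_mul, Equiv.Perm.mul_apply]
  have hphi0 : phiP p 0 = 0 := by simp [phiP]
  have hphineg : ∀ t : ℝ, phiP p (-t) = -phiP p t := by
    intro t; simp only [phiP, abs_neg]; ring
  constructor
  · -- periodicity
    intro y hy x
    have hfy : f y = 1 := hy
    have : cosetIdx ρ (y * x) = cosetIdx ρ x := by
      have : ρ (y * x) = ρ x := by
        rw [← hρf (y * x), map_mul, hfy, one_mul, hρf]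
      simp [cosetIdx, this]
    beta_reduce
    rw [this]
  · -- harmonicity
    intro x
    obtain ⟨ε, hε, H⟩ := haff x
    set n : ℤ := cosetIdx ρ x with hn
    -- the function u equals U ∘ cosetIdx ρ
    have hiidx : cosetIdx ρ (x * gen k i) = n + ε := by
      rw [hnbr x i, hρi 0, show (1 : ℤ) - 0 = 1 by ring, H 1]; simp [hn, cosetIdx]
    have hjidx : cosetIdx ρ (x * gen k j) = n - ε := by
      rw [hnbr x j, hρj 0, show (-1 : ℤ) - 0 = -1 by ring, H (-1)]
      simp [hn, cosetIdx]; ring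
    have hsidx : ∀ s : Fin (k + 1), s ≠ i → s ≠ j → cosetIdx ρ (x * gen k s) = n := by
      intro s hsi hsj
      rw [hnbr x s, hρs s hsi hsj]; simp [hn, cosetIdx]
    -- term for a neighbour with index n + 1
    have hplus : ∀ y : G k, cosetIdx ρ y = n + 1 →
        phiP p (((fun x => A * (∑' s : {m : ℤ // m < cosetIdx ρ x}, ϱ s) +
          B * (∑' s : {m : ℤ // cosetIdx ρ x ≤ m}, ϱ s)) y - U n) / r (x, y)) = phiP p (A - B) := by
      intro y hy
      have hr1 : r (x, y) = ϱ n := hrϱ x y (by rw [hy, hn])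
      have hdiff : (fun x => A * (∑' s : {m : ℤ // m < cosetIdx ρ x}, ϱ s) +
          B * (∑' s : {m : ℤ // cosetIdx ρ x ≤ m}, ϱ s)) y - U n = (A - B) * ϱ n := by
        have : (fun x => A * (∑' s : {m : ℤ // m < cosetIdx ρ x}, ϱ s) +
            B * (∑' s : {m : ℤ // cosetIdx ρ x ≤ m}, ϱ s)) y = U (n + 1) := by
          simp only [hU]; rw [hy]
        rw [this, hUdiff n]
      rw [hdiff, hr1, mul_div_assoc, div_self (ne_of_gt (hϱ_pos n)), mul_one]
    -- term for a neighbour with index n - 1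
    have hminus : ∀ y : G k, cosetIdx ρ y = n - 1 →
        phiP p (((fun x => A * (∑' s : {m : ℤ // m < cosetIdx ρ x}, ϱ s) +
          B * (∑' s : {m : ℤ // cosetIdx ρ x ≤ m}, ϱ s)) y - U n) / r (x, y)) = -phiP p (A - B) := by
      intro y hy
      have hr1 : r (x, y) = ϱ (n - 1) := by
        rw [hr_symm]
        have := hrϱ y x (by rw [hy, hn]; ring)
        rw [this, hy]
      have hdiff : (fun x => A * (∑' s : {m : ℤ // m < cosetIdx ρ x}, ϱ s) +
          B * (∑' s : {m : ℤ // cosetIdx ρ x ≤ m}, ϱ s)) y - U n = -((A - B) * ϱ (n - 1)) := by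
        have h1 : (fun x => A * (∑' s : {m : ℤ // m < cosetIdx ρ x}, ϱ s) +
            B * (∑' s : {m : ℤ // cosetIdx ρ x ≤ m}, ϱ s)) y = U (n - 1) := by
          simp only [hU]; rw [hy]
        have h2 : U ((n - 1) + 1) - U (n - 1) = (A - B) * ϱ (n - 1) := hUdiff (n - 1)
        rw [h1]
        have : (n - 1) + 1 = n := by ring
        rw [this] at h2
        linarith
      rw [hdiff, hr1, neg_div, mul_div_assoc,
        div_self (ne_of_gt (hϱ_pos (n - 1))), mul_one, hphineg]
    -- term for the other neighbours
    have hzero : ∀ s : Fin (k + 1), s ≠ i → s ≠ j →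
        phiP p (((fun x => A * (∑' s : {m : ℤ // m < cosetIdx ρ x}, ϱ s) +
          B * (∑' s : {m : ℤ // cosetIdx ρ x ≤ m}, ϱ s)) (x * gen k s) - U n) /
          r (x, x * gen k s)) = 0 := by
      intro s hsi hsj
      have h1 : (fun x => A * (∑' s : {m : ℤ // m < cosetIdx ρ x}, ϱ s) +
          B * (∑' s : {m : ℤ // cosetIdx ρ x ≤ m}, ϱ s)) (x * gen k s) = U n := by
        simp only [hU]; rw [hsidx s hsi hsj]
      rw [h1, sub_self, zero_div, hphi0]
    have hUx : (fun x => A * (∑' s : {m : ℤ // m < cosetIdx ρ x}, ϱ s) +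
        B * (∑' s : {m : ℤ // cosetIdx ρ x ≤ m}, ϱ s)) x = U n := by simp only [hU]; rfl
    rw [pLap]
    simp only [hUx]
    have hsum : ∑ s : Fin (k + 1),
        phiP p (((fun x => A * (∑' s : {m : ℤ // m < cosetIdx ρ x}, ϱ s) +
          B * (∑' s : {m : ℤ // cosetIdx ρ x ≤ m}, ϱ s)) (x * gen k s) - U n) / r (x, x * gen k s))
        = ∑ s ∈ ({i, j} : Finset (Fin (k + 1))),
        phiP p (((fun x => A * (∑' s : {m : ℤ // m < cosetIdx ρ x}, ϱ s) +
          B * (∑' s : {m : ℤ // cosetIdx ρ x ≤ m}, ϱ s)) (x * gen k s) - U n) /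
          r (x, x * gen k s)) := by
      refine (Finset.sum_subset (Finset.subset_univ _) ?_).symm
      intro s _ hs
      simp only [Finset.mem_insert, Finset.mem_singleton, not_or] at hs
      exact hzero s hs.1 hs.2
    rw [hsum, Finset.sum_pair hij]
    rcases hε with rfl | rfl
    · rw [hplus _ hiidx, hminus _ (by rw [hjidx]), ]
      ring
    · rw [hminus _ (by rw [hiidx]; ring), hplus _ (by rw [hjidx]; ring)]
      ring
end
end
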